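/- (Proposition 1, lower bound on the first spurious weight) Suppose 0 < v_j(0) < (1/2)·log(p/(1-p)) for every j. Fix T > 0 and set M = u(T). Then for all 0 < t < T, v_1(t) > (1/2)·log(p/(1-p)) + log tanh( artanh( √((1-p)/p) · e^{v_1(0)} ) + e^{-M} · 2^{D-1} · (p(1-p))^{D/2} · t ). -/

import Mathlib

noncomputable def artanh (x : ℝ) : ℝ := (1 / 2) * Real.log ((1 + x) / (1 - x))

lemma tanh_eq' (x : ℝ) : Real.tanh x = (Real.exp x - Real.exp (-x)) / (Real.exp x + Real.exp (-x)) := by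
  rw [Real.tanh_eq_sinh_div_cosh, Real.sinh_eq, Real.cosh_eq]
  have h : Real.exp x + Real.exp (-x) > 0 := by positivity
  field_simp

lemma tanh_strictMono' : StrictMono Real.tanh := by
  intro a b hab
  rw [tanh_eq', tanh_eq', div_lt_div_iff₀ (by positivity) (by positivity)]
  have h1 : Real.exp (a - b) < Real.exp (b - a) := by
    apply Real.exp_lt_exp.2; linarith
  have e1 : Real.exp (a-b) = Real.exp a * Real.exp (-b) := by rw [← Real.exp_add]; ring_nf
  have e2 : Real.exp (b-a) = Real.exp b * Real.exp (-a) := by rw [← Real.exp_add]; ring_nf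
  nlinarith [Real.exp_pos a, Real.exp_pos b, Real.exp_pos (-a), Real.exp_pos (-b)]

lemma tanh_pos' {x : ℝ} (h : 0 < x) : 0 < Real.tanh x := by
  have := tanh_strictMono' h
  simpa [Real.tanh_eq_sinh_div_cosh] using this

lemma tanh_artanh' {x : ℝ} (h0 : 0 < x) (h1 : x < 1) : Real.tanh (artanh x) = x := by
  have hx1 : (0:ℝ) < 1 - x := by linarith
  have hq : (0:ℝ) < (1 + x) / (1 - x) := by positivity
  set E := Real.exp (artanh x) with hE
  have hEpos : 0 < E := Real.exp_pos _
  have hE2 : E ^ 2 = (1+x)/(1-x) := by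
    rw [hE, ← Real.exp_nat_mul, ← Real.exp_log hq, artanh]
    push_cast
    ring_nf
  have hinv : Real.exp (-(artanh x)) = E⁻¹ := by rw [Real.exp_neg]
  rw [tanh_eq', hinv, ← hE]
  rw [div_eq_iff (by positivity)]
  have h2 : E - E⁻¹ = (E^2 - 1) * E⁻¹ := by field_simp
  have h3 : E + E⁻¹ = (E^2 + 1) * E⁻¹ := by field_simp
  rw [h2, h3, hE2]
  field_simp
  ring

lemma two_sqrt_le' {a b : ℝ} (ha : 0 ≤ a) (hb : 0 ≤ b) : 2 * Real.sqrt (a*b) ≤ a + b := by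
  nlinarith [sq_nonneg (Real.sqrt a - Real.sqrt b), Real.sq_sqrt ha, Real.sq_sqrt hb,
    Real.sqrt_mul ha b, Real.sqrt_nonneg a, Real.sqrt_nonneg b]

/-- **Proposition 1, lower bound on the first spurious weight.** -/
theorem stmt_14
    (D : ℕ) (hD : 0 < D) (p : ℝ) (hp : 1 / 2 < p) (hp1 : p < 1)
    (u : ℝ → ℝ) (v : Fin D → ℝ → ℝ)
    -- gradient-flow system on `[0, ∞)`
    (hu : ∀ t ∈ Set.Ici (0 : ℝ),
      HasDerivWithinAt u
        (Real.exp (-u t) * ∏ i, (p * Real.exp (-v i t) + (1 - p) * Real.exp (v i t)))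
        (Set.Ici 0) t)
    (hv : ∀ (j : Fin D), ∀ t ∈ Set.Ici (0 : ℝ),
      HasDerivWithinAt (v j)
        (Real.exp (-u t) * (p * Real.exp (-v j t) - (1 - p) * Real.exp (v j t)) *
          ∏ i ∈ Finset.univ.erase j,
            (p * Real.exp (-v i t) + (1 - p) * Real.exp (v i t)))
        (Set.Ici 0) t)
    (hv0 : ∀ j, 0 < v j 0 ∧ v j 0 < (1 / 2) * Real.log (p / (1 - p)))
    (T : ℝ) (hT : 0 < T) :
    ∀ t : ℝ, 0 < t → t < T →
      (1 / 2) * Real.log (p / (1 - p)) +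
        Real.log (Real.tanh (artanh (Real.sqrt ((1 - p) / p) * Real.exp (v ⟨0, hD⟩ 0)) +
          Real.exp (-u T) * 2 ^ (D - 1) * (p * (1 - p)) ^ ((D : ℝ) / 2) * t))
      < v ⟨0, hD⟩ t := by
  intro t ht htT
  have hp0 : (0:ℝ) < p := by linarith
  have hq0 : (0:ℝ) < 1 - p := by linarith
  set j₀ : Fin D := ⟨0, hD⟩ with hj₀
  set V : ℝ → ℝ := v j₀ with hVdef
  set r : ℝ := Real.sqrt ((1-p)/p) with hrdef
  have hr : 0 < r := Real.sqrt_pos.2 (by positivity)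
  set z : ℝ → ℝ := fun s => r * Real.exp (V s) with hzdef
  have hzpos : ∀ s, 0 < z s := fun s => by positivity
  set sq : ℝ := Real.sqrt (p*(1-p)) with hsqdef
  have hsqpos : 0 < sq := Real.sqrt_pos.2 (by positivity)
  set G : Fin D → ℝ → ℝ := fun i s => p * Real.exp (-v i s) + (1 - p) * Real.exp (v i s)
    with hGdef
  set P : ℝ → ℝ := fun s => ∏ i ∈ Finset.univ.erase j₀, G i s with hPdef
  have hGpos : ∀ i s, 0 < G i s := fun i s => by
    have := Real.exp_pos (-v i s); have := Real.exp_pos (v i s); positivity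
  have hPpos : ∀ s, 0 < P s := fun s => Finset.prod_pos (fun i _ => hGpos i s)
  have hGge : ∀ i s, 2 * sq ≤ G i s := by
    intro i s
    have h := two_sqrt_le' (a := p * Real.exp (-v i s)) (b := (1-p) * Real.exp (v i s))
      (by positivity) (by positivity)
    have harg : p * Real.exp (-v i s) * ((1-p) * Real.exp (v i s)) = p * (1-p) := by
      rw [mul_mul_mul_comm, ← Real.exp_add]; simp
    rw [harg] at h
    exact h
  have hPge : ∀ s, (2*sq)^(D-1) ≤ P s := by
    intro s
    have hcard : (Finset.univ.erase j₀).card = D - 1 := by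
      rw [Finset.card_erase_of_mem (Finset.mem_univ _), Finset.card_univ, Fintype.card_fin]
    calc (2*sq)^(D-1) = ∏ _i ∈ Finset.univ.erase j₀, (2*sq) := by
          rw [Finset.prod_const, hcard]
      _ ≤ P s := Finset.prod_le_prod (fun i _ => by positivity) (fun i _ => hGge i s)
  -- continuity
  have hucont : ContinuousOn u (Set.Ici 0) := fun s hs => (hu s hs).continuousWithinAt
  have hvcont : ∀ i, ContinuousOn (v i) (Set.Ici 0) := fun i s hs =>
    (hv i s hs).continuousWithinAt
  have hGcont : ∀ i, ContinuousOn (G i) (Set.Ici 0) := by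
    intro i
    exact (continuousOn_const.mul (Real.continuous_exp.comp_continuousOn (hvcont i).neg)).add
      (continuousOn_const.mul (Real.continuous_exp.comp_continuousOn (hvcont i)))
  have hPcont : ContinuousOn P (Set.Ici 0) := by
    apply continuousOn_finset_prod
    intro i _
    exact hGcont i
  have hzcont : ContinuousOn z (Set.Ici 0) :=
    continuousOn_const.mul (Real.continuous_exp.comp_continuousOn (hvcont j₀))
  have heucont : ContinuousOn (fun s => Real.exp (-u s)) (Set.Ici 0) :=
    Real.continuous_exp.comp_continuousOn hucont.neg
  -- key algebraic identity
  have h1' : r ^ 2 * p = 1 - p := by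
    have h1 : r ^ 2 = (1-p)/p := Real.sq_sqrt (le_of_lt (div_pos hq0 hp0))
    rw [h1]; field_simp
  have h2' : sq ^ 2 = p * (1 - p) := Real.sq_sqrt (by positivity)
  have hrp : r * p = sq := by
    have h3 : (r*p - sq) * (r*p + sq) = 0 := by linear_combination p * h1' - h2'
    rcases mul_eq_zero.1 h3 with h | h
    · linarith
    · nlinarith
  have hrsq : r * sq = 1 - p := by
    have h4 : (r*sq - (1-p)) * (r*sq + (1-p)) = 0 := by
      linear_combination r^2 * h2' + (1-p) * h1'
    rcases mul_eq_zero.1 h4 with h | h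
    · linarith
    · nlinarith
  have hkey : ∀ s, z s * (p * Real.exp (-V s) - (1 - p) * Real.exp (V s))
      = sq * (1 - (z s)^2) := by
    intro s
    have e1 : Real.exp (-V s) * Real.exp (V s) = 1 := by rw [← Real.exp_add]; simp
    simp only [hzdef]
    linear_combination (r*p) * e1 + hrp + (r * (Real.exp (V s))^2) * hrsq
  -- derivative of z
  have hz' : ∀ s ∈ Set.Ici (0:ℝ), HasDerivWithinAt z
      (Real.exp (-u s) * sq * P s * (1 - (z s)^2)) (Set.Ici 0) s := by
    intro s hs
    have h1 := hv j₀ s hs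
    have h2 : HasDerivWithinAt z
        (r * (Real.exp (V s) * (Real.exp (-u s) * (p * Real.exp (-V s)
          - (1 - p) * Real.exp (V s)) * P s))) (Set.Ici 0) s :=
      (h1.exp).const_mul r
    have heq : Real.exp (-u s) * sq * P s * (1 - (z s)^2)
        = r * (Real.exp (V s) * (Real.exp (-u s) * (p * Real.exp (-V s)
          - (1 - p) * Real.exp (V s)) * P s)) := by
      have hk := hkey s
      have hzs : z s = r * Real.exp (V s) := rfl
      linear_combination (-(Real.exp (-u s) * P s)) * hk
        + (Real.exp (-u s) * P s * (p * Real.exp (-V s) - (1 - p) * Real.exp (V s))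
            - Real.exp (-u s) * sq * P s * (z s + r * Real.exp (V s))) * hzs
    rw [heq]
    exact h2
  -- derivative of f = 1 - z
  set C : ℝ → ℝ := fun s => Real.exp (-u s) * sq * P s * (1 + z s) with hCdef
  have hf' : ∀ s ∈ Set.Ici (0:ℝ),
      HasDerivWithinAt (fun s' => 1 - z s') (-(C s) * (1 - z s)) (Set.Ici 0) s := by
    intro s hs
    have h := (hz' s hs).const_sub 1
    have heq : -(C s) * (1 - z s) = -(Real.exp (-u s) * sq * P s * (1 - (z s)^2)) := by
      simp only [hCdef]; ring
    rw [heq]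
    exact h
  -- z 0 < 1
  have hexpc : Real.exp ((1/2) * Real.log (p/(1-p))) * r = 1 := by
    have h1 : Real.exp ((1/2) * Real.log (p/(1-p))) = Real.sqrt (p/(1-p)) := by
      rw [Real.sqrt_eq_rpow, Real.rpow_def_of_pos (div_pos hp0 hq0)]
      ring_nf
    rw [h1, hrdef, ← Real.sqrt_mul (le_of_lt (div_pos hp0 hq0))]
    rw [show p/(1-p) * ((1-p)/p) = 1 by field_simp]
    exact Real.sqrt_one
  have hz0lt : z 0 < 1 := by
    have hV0 : V 0 < (1/2) * Real.log (p/(1-p)) := (hv0 j₀).2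
    have h2 : Real.exp (V 0) < Real.exp ((1/2) * Real.log (p/(1-p))) := Real.exp_lt_exp.2 hV0
    calc z 0 = r * Real.exp (V 0) := rfl
      _ < r * Real.exp ((1/2) * Real.log (p/(1-p))) := by
          exact mul_lt_mul_of_pos_left h2 hr
      _ = 1 := by rw [mul_comm]; exact hexpc
  -- invariance: z stays below 1
  have hCcont : ContinuousOn C (Set.Ici 0) :=
    ((heucont.mul continuousOn_const).mul hPcont).mul (continuousOn_const.add hzcont)
  have hinv : ∀ b : ℝ, 0 ≤ b → z b < 1 := by
    intro b hb
    by_contra hge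
    push_neg at hge
    have hIccb : Set.Icc (0:ℝ) b ⊆ Set.Ici 0 := fun x hx => hx.1
    obtain ⟨s₀, hs₀mem, hs₀⟩ : ∃ s₀ ∈ Set.Icc (0:ℝ) b, z s₀ = 1 := by
      have him := intermediate_value_Icc hb (hzcont.mono hIccb)
      have h1 : (1:ℝ) ∈ Set.Icc (z 0) (z b) := ⟨hz0lt.le, hge⟩
      obtain ⟨s₀, hmem, h⟩ := him h1
      exact ⟨s₀, hmem, h⟩
    have hs₀0 : 0 ≤ s₀ := hs₀mem.1
    have hIcc : Set.Icc (0:ℝ) s₀ ⊆ Set.Ici 0 := fun x hx => hx.1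
    obtain ⟨Kb, hKb⟩ := (isCompact_Icc (a := (0:ℝ)) (b := s₀)).exists_bound_of_continuousOn
      (hCcont.mono hIcc)
    have hKb0 : 0 ≤ Kb := le_trans (norm_nonneg _) (hKb 0 ⟨le_refl 0, hs₀0⟩)
    set proj : ℝ → ℝ := fun s => max 0 (min s s₀) with hprojdef
    set F : ℝ → ℝ → ℝ := fun s x => -(C (proj s)) * x with hFdef
    have hprojmem : ∀ s, proj s ∈ Set.Icc (0:ℝ) s₀ :=
      fun s => ⟨le_max_left _ _, max_le hs₀0 (min_le_right _ _)⟩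
    have hlip : ∀ s, LipschitzOnWith Kb.toNNReal (F s) Set.univ := by
      intro s
      apply LipschitzOnWith.of_dist_le_mul
      intro x _ y _
      rw [Real.dist_eq, Real.dist_eq]
      have h1 : F s x - F s y = -(C (proj s)) * (x - y) := by simp only [hFdef]; ring
      rw [h1, abs_mul, abs_neg]
      have h2 : |C (proj s)| ≤ Kb := by
        have := hKb (proj s) (hprojmem s)
        simpa [Real.norm_eq_abs] using this
      have h3 : (Kb.toNNReal : ℝ) = Kb := Real.coe_toNNReal _ hKb0
      rw [h3]
      exact mul_le_mul_of_nonneg_right h2 (abs_nonneg _)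
    have huniq := ODE_solution_unique_of_mem_Icc_left (v := F) (s := fun _ => Set.univ)
      (K := Kb.toNNReal) (f := fun s => 1 - z s) (g := fun _ => (0:ℝ)) (a := 0) (b := s₀)
      (fun s _ => hlip s)
      (continuousOn_const.sub (hzcont.mono hIcc))
      (by
        intro s hs
        have h := hf' s (le_of_lt hs.1)
        have h2 := (h.hasDerivAt (Ici_mem_nhds hs.1)).hasDerivWithinAt (s := Set.Iic s)
        have h3 : F s (1 - z s) = -(C s) * (1 - z s) := by
          have hps : proj s = s := by
            simp only [hprojdef]
            rw [min_eq_left hs.2, max_eq_right hs.1.le]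
          simp only [hFdef, hps]
        rw [h3]
        exact h2)
      (fun _ _ => Set.mem_univ _)
      continuousOn_const
      (by
        intro s hs
        have : F s 0 = 0 := by simp [hFdef]
        rw [this]
        exact hasDerivWithinAt_const _ _ _)
      (fun _ _ => Set.mem_univ _)
      (by simp [hs₀])
    have h0 := huniq ⟨le_refl 0, hs₀0⟩
    simp only at h0
    have : z 0 = 1 := by linarith [h0]
    linarith
  -- u is strictly monotone on [0, ∞)
  have humono : StrictMonoOn u (Set.Ici 0) := by
    apply strictMonoOn_of_hasDerivWithinAt_pos (convex_Ici 0) hucont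
      (f' := fun s => Real.exp (-u s) * ∏ i, G i s)
    · intro x hx
      rw [interior_Ici] at hx ⊢
      exact ((hu x (Set.mem_Ici.2 (le_of_lt (Set.mem_Ioi.1 hx)))).hasDerivAt (Ici_mem_nhds (Set.mem_Ioi.1 hx))).hasDerivWithinAt
    · intro x hx
      exact mul_pos (Real.exp_pos _) (Finset.prod_pos fun i _ => hGpos i x)
  -- growth of w = artanh ∘ z
  set B : ℝ → ℝ := fun s => Real.exp (-u s) * sq * P s with hBdef
  set w : ℝ → ℝ := fun s => (1/2) * (Real.log (1 + z s) - Real.log (1 - z s)) with hwdef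
  have hIccIci : Set.Icc (0:ℝ) t ⊆ Set.Ici 0 := fun x hx => hx.1
  have hzlt : ∀ s ∈ Set.Icc (0:ℝ) t, z s < 1 := fun s hs => hinv s hs.1
  have hw' : ∀ s ∈ Set.Icc (0:ℝ) t, HasDerivWithinAt w (B s) (Set.Icc 0 t) s := by
    intro s hs
    have hz1 : z s < 1 := hzlt s hs
    have hz0 : 0 < z s := hzpos s
    have hzd := (hz' s (hIccIci hs)).mono hIccIci
    have l1 := (hzd.const_add 1).log (by positivity : (1:ℝ) + z s ≠ 0)
    have l2 := (hzd.const_sub 1).log (by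
      have : (0:ℝ) < 1 - z s := by linarith
      exact this.ne')
    have l3 := (l1.sub l2).const_mul (1/2 : ℝ)
    have heq : B s = (1/2 : ℝ) * (Real.exp (-u s) * sq * P s * (1 - z s ^ 2) / (1 + z s)
        - -(Real.exp (-u s) * sq * P s * (1 - z s ^ 2)) / (1 - z s)) := by
      have h1 : (1:ℝ) + z s ≠ 0 := by positivity
      have h2 : (1:ℝ) - z s ≠ 0 := by
        have : (0:ℝ) < 1 - z s := by linarith
        exact this.ne'
      field_simp
      ring
    rw [heq]
    exact l3
  have hwcont : ContinuousOn w (Set.Icc 0 t) := fun s hs => (hw' s hs).continuousWithinAt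
  set Ct : ℝ := Real.exp (-u t) * sq * (2*sq)^(D-1) with hCtdef
  have hBge : ∀ s ∈ Set.Icc (0:ℝ) t, Ct ≤ B s := by
    intro s hs
    have hus : u s ≤ u t := humono.monotoneOn hs.1 (Set.mem_Ici.2 ht.le) hs.2
    have h1 : Real.exp (-u t) ≤ Real.exp (-u s) := Real.exp_le_exp.2 (by linarith)
    calc Ct = Real.exp (-u t) * sq * (2*sq)^(D-1) := rfl
      _ ≤ Real.exp (-u s) * sq * (2*sq)^(D-1) := by
          apply mul_le_mul_of_nonneg_right (mul_le_mul_of_nonneg_right h1 hsqpos.le)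
          positivity
      _ ≤ B s := mul_le_mul_of_nonneg_left (hPge s) (by positivity)
  have hgrow : w 0 + Ct * t ≤ w t := by
    have hmono : MonotoneOn (fun s => w s - Ct * s) (Set.Icc 0 t) := by
      apply monotoneOn_of_hasDerivWithinAt_nonneg (convex_Icc 0 t)
        (f' := fun s => B s - Ct)
      · exact hwcont.sub (continuousOn_id.const_smul Ct)
      · intro x hx
        rw [interior_Icc] at hx ⊢
        have h := (hw' x ⟨hx.1.le, hx.2.le⟩).mono Set.Ioo_subset_Icc_self
        have h2 : HasDerivWithinAt (fun s : ℝ => Ct * s) (Ct * 1) (Set.Ioo 0 t) x :=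
          (hasDerivWithinAt_id x _).const_mul Ct
        have h3 := h.sub h2
        simp only [mul_one] at h3
        exact h3
      · intro x hx
        rw [interior_Icc] at hx
        have := hBge x ⟨hx.1.le, hx.2.le⟩
        linarith
    have h := hmono (Set.left_mem_Icc.2 ht.le) (Set.right_mem_Icc.2 ht.le) ht.le
    simp only at h
    linarith
  -- assembly
  have hz0pos : 0 < z 0 := hzpos 0
  have hzt1 : z t < 1 := hinv t ht.le
  have hzt0 : 0 < z t := hzpos t
  have hw0 : w 0 = artanh (z 0) := by
    rw [artanh, Real.log_div (by positivity) (by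
      have : (0:ℝ) < 1 - z 0 := by linarith
      exact this.ne')]
  have hwt : w t = artanh (z t) := by
    rw [artanh, Real.log_div (by positivity) (by
      have : (0:ℝ) < 1 - z t := by linarith
      exact this.ne')]
  have hQ : sq * (2*sq)^(D-1) = 2^(D-1) * (p*(1-p))^((D:ℝ)/2) := by
    have hsqD : sq * sq^(D-1) = (p*(1-p))^((D:ℝ)/2) := by
      have h1 : sq * sq^(D-1) = sq^D := by
        rw [← pow_succ']
        congr 1
        omega
      rw [h1, hsqdef, Real.sqrt_eq_rpow, ← Real.rpow_natCast ((p*(1-p))^((1:ℝ)/2)) D,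
        ← Real.rpow_mul (by positivity)]
      congr 1
      push_cast
      ring
    rw [mul_pow]
    calc sq * (2^(D-1) * sq^(D-1)) = 2^(D-1) * (sq * sq^(D-1)) := by ring
      _ = 2^(D-1) * (p*(1-p))^((D:ℝ)/2) := by rw [hsqD]
  set K : ℝ := Real.exp (-u T) * 2^(D-1) * (p*(1-p))^((D:ℝ)/2) with hKdef
  have hKlt : K * t < Ct * t := by
    have h1 : Real.exp (-u T) < Real.exp (-u t) :=
      Real.exp_lt_exp.2 (by
        have := humono (Set.mem_Ici.2 ht.le) (Set.mem_Ici.2 (le_of_lt (lt_trans ht htT))) htT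
        linarith)
    have hrw : K = Real.exp (-u T) * (sq * (2*sq)^(D-1)) := by
      rw [hKdef, hQ]; ring
    have hrw2 : Ct = Real.exp (-u t) * (sq * (2*sq)^(D-1)) := by
      rw [hCtdef]; ring
    rw [hrw, hrw2]
    apply mul_lt_mul_of_pos_right _ ht
    exact mul_lt_mul_of_pos_right h1 (by positivity)
  have ha0pos : 0 < artanh (z 0) := by
    rw [artanh]
    apply mul_pos (by norm_num)
    apply Real.log_pos
    rw [lt_div_iff₀ (by linarith)]
    linarith
  have hKpos : 0 < K := by
    rw [hKdef]
    have : (0:ℝ) < (p*(1-p))^((D:ℝ)/2) := Real.rpow_pos_of_pos (by positivity) _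
    positivity
  have hs₁pos : 0 < artanh (z 0) + K * t := by positivity
  have hyt : artanh (z 0) + K * t < w t := by
    rw [← hw0] at *
    linarith
  have htanh : Real.tanh (artanh (z 0) + K * t) < z t := by
    have h1 : Real.tanh (artanh (z 0) + K * t) < Real.tanh (w t) := tanh_strictMono' hyt
    rw [hwt, tanh_artanh' hzt0 hzt1] at h1
    exact h1
  have hlog : Real.log (Real.tanh (artanh (z 0) + K * t)) < Real.log (z t) :=
    Real.log_lt_log (tanh_pos' hs₁pos) htanh
  have hlogz : Real.log (z t) = Real.log r + V t := by
    rw [hzdef]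
    simp only
    rw [Real.log_mul hr.ne' (Real.exp_ne_zero _), Real.log_exp]
  have hcr : (1/2) * Real.log (p/(1-p)) + Real.log r = 0 := by
    rw [hrdef, Real.log_sqrt (le_of_lt (div_pos hq0 hp0))]
    rw [show (1-p)/p = (p/(1-p))⁻¹ by rw [inv_div], Real.log_inv]
    ring
  have hgoal : artanh (Real.sqrt ((1 - p) / p) * Real.exp (v ⟨0, hD⟩ 0)) = artanh (z 0) := rfl
  calc (1 / 2) * Real.log (p / (1 - p)) +
        Real.log (Real.tanh (artanh (Real.sqrt ((1 - p) / p) * Real.exp (v ⟨0, hD⟩ 0)) +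
          Real.exp (-u T) * 2 ^ (D - 1) * (p * (1 - p)) ^ ((D : ℝ) / 2) * t))
      = (1/2) * Real.log (p/(1-p)) + Real.log (Real.tanh (artanh (z 0) + K * t)) := rfl
    _ < (1/2) * Real.log (p/(1-p)) + Real.log (z t) := by linarith
    _ = V t := by rw [hlogz]; linarith [hcr]
    _ = v ⟨0, hD⟩ t := rfl
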